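/- (Characterization of right invertibility, used in Lemma 2) An element F of the free Cartesian monoid CM is right invertible if and only if, in the CM normal form of F (a binary tree built from pairing ⟨-,-⟩ with a shift at each leaf), no shift occurring at a leaf is a final segment (reading the string of L's and R's left to right) of the shift occurring at another leaf. -/

import Mathlib

/-- Terms of the free (quasi-)Cartesian monoid: constants `I, L, R`,
composition `comp` (written `*` in the paper) and pairing `pair`. -/
inductive Term : Type
  | I : Term
  | L : Term
  | R : Term
  | comp : Term → Term → Term
  | pair : Term → Term → Term
  deriving DecidableEq

open Term

/-- The rewrite rules (1)-(7), indexed by their number. -/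
inductive Rule : ℕ → Term → Term → Prop
  | r1 (x y : Term) : Rule 1 (comp L (pair x y)) x
  | r2 (x y : Term) : Rule 2 (comp R (pair x y)) y
  | r3 (x y z : Term) : Rule 3 (comp (pair x y) z) (pair (comp x z) (comp y z))
  | r4 (x : Term) : Rule 4 (comp I x) x
  | r5 (x : Term) : Rule 5 (comp x I) x
  | r6 (x : Term) : Rule 6 (pair (comp L x) (comp R x)) x
  | r7 : Rule 7 (pair L R) I

/-- The congruence generated by associativity of `comp`. -/
inductive AssocEq : Term → Term → Prop
  | assoc (a b c : Term) : AssocEq (comp (comp a b) c) (comp a (comp b c))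
  | refl (a : Term) : AssocEq a a
  | symm {a b : Term} : AssocEq a b → AssocEq b a
  | trans {a b c : Term} : AssocEq a b → AssocEq b c → AssocEq a c
  | comp_congr {a a' b b' : Term} :
      AssocEq a a' → AssocEq b b' → AssocEq (comp a b) (comp a' b')
  | pair_congr {a a' b b' : Term} :
      AssocEq a a' → AssocEq b b' → AssocEq (pair a b) (pair a' b')

/-- One-step rewriting by a rule whose index lies in `J`,
closed under replacement of subterms (monotone closure). -/
inductive Step (J : Set ℕ) : Term → Term → Prop
  | rule {n : ℕ} {x y : Term} : n ∈ J → Rule n x y → Step J x y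
  | comp_left {a a' b : Term} : Step J a a' → Step J (comp a b) (comp a' b)
  | comp_right {a b b' : Term} : Step J b b' → Step J (comp a b) (comp a b')
  | pair_left {a a' b : Term} : Step J a a' → Step J (pair a b) (pair a' b)
  | pair_right {a b b' : Term} : Step J b b' → Step J (pair a b) (pair a b')

/-- One-step rewriting modulo associativity. -/
def StepA (J : Set ℕ) (a b : Term) : Prop :=
  ∃ a' b', AssocEq a a' ∧ Step J a' b' ∧ AssocEq b' b

/-- Many-step rewriting `↠_J`: the monotone reflexive transitive closure of
one-step rewriting by the rules in `J`, modulo associativity. -/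
def Red (J : Set ℕ) (a b : Term) : Prop :=
  ∃ c, Relation.ReflTransGen (StepA J) a c ∧ AssocEq c b

/-- `a` is in normal form w.r.t. the rules in `J` (modulo associativity). -/
def NF (J : Set ℕ) (a : Term) : Prop := ∀ b, ¬ StepA J a b

/-- Rules (1)-(7). -/
def rules17 : Set ℕ := {n | 1 ≤ n ∧ n ≤ 7}
/-- Rules (1)-(5). -/
def rules15 : Set ℕ := {n | 1 ≤ n ∧ n ≤ 5}
/-- Rules (1)-(4). -/
def rules14 : Set ℕ := {n | 1 ≤ n ∧ n ≤ 4}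
/-- Rules (5), (6), (7). -/
def rules567 : Set ℕ := {5, 6, 7}

/-- The congruence `=_CM` generated by the Cartesian monoid axioms (i)-(iv)
and the monoid axioms for `comp` with unit `I`. -/
inductive CMEq : Term → Term → Prop
  | proj_left (f g : Term) : CMEq (comp L (pair f g)) f
  | proj_right (f g : Term) : CMEq (comp R (pair f g)) g
  | lift (f g h : Term) : CMEq (comp (pair f g) h) (pair (comp f h) (comp g h))
  | surj : CMEq (pair L R) I
  | assoc (a b c : Term) : CMEq (comp (comp a b) c) (comp a (comp b c))
  | one_mul (a : Term) : CMEq (comp I a) a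
  | mul_one (a : Term) : CMEq (comp a I) a
  | refl (a : Term) : CMEq a a
  | symm {a b : Term} : CMEq a b → CMEq b a
  | trans {a b c : Term} : CMEq a b → CMEq b c → CMEq a c
  | comp_congr {a a' b b' : Term} :
      CMEq a a' → CMEq b b' → CMEq (comp a b) (comp a' b')
  | pair_congr {a a' b b' : Term} :
      CMEq a a' → CMEq b b' → CMEq (pair a b) (pair a' b')

/-- The congruence `=_CQ` generated by the axioms (i)-(iii)
and the monoid axioms (no surjectivity `⟨L,R⟩ = I`). -/
inductive CQEq : Term → Term → Prop
  | proj_left (f g : Term) : CQEq (comp L (pair f g)) f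
  | proj_right (f g : Term) : CQEq (comp R (pair f g)) g
  | lift (f g h : Term) : CQEq (comp (pair f g) h) (pair (comp f h) (comp g h))
  | assoc (a b c : Term) : CQEq (comp (comp a b) c) (comp a (comp b c))
  | one_mul (a : Term) : CQEq (comp I a) a
  | mul_one (a : Term) : CQEq (comp a I) a
  | refl (a : Term) : CQEq a a
  | symm {a b : Term} : CQEq a b → CQEq b a
  | trans {a b c : Term} : CQEq a b → CQEq b c → CQEq a c
  | comp_congr {a a' b b' : Term} :
      CQEq a a' → CQEq b b' → CQEq (comp a b) (comp a' b')
  | pair_congr {a a' b b' : Term} :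
      CQEq a a' → CQEq b b' → CQEq (pair a b) (pair a' b')

/-- An injective numerical encoding of terms, used to state computability. -/
def encodeTerm : Term → ℕ
  | I => 0
  | L => 1
  | R => 2
  | comp a b => 2 * Nat.pair (encodeTerm a) (encodeTerm b) + 3
  | pair a b => 2 * Nat.pair (encodeTerm a) (encodeTerm b) + 4

/-- A numerical encoding of finite lists of terms. -/
def encodeTermList : List Term → ℕ
  | [] => 0
  | a :: l => Nat.pair (encodeTerm a) (encodeTermList l) + 1

/-- The product of a list of terms (with `I` as the empty product). -/
def listProd : List Term → Term
  | [] => I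
  | a :: l => comp a (listProd l)

/-- `=_CQ` as a setoid. -/
def cqSetoid : Setoid Term :=
  ⟨CQEq, ⟨fun a => CQEq.refl a, fun h => h.symm, fun h₁ h₂ => h₁.trans h₂⟩⟩

/-- The free categorical quasiproduct monoid `CQ = T / =_CQ`. -/
def CQ : Type := Quotient cqSetoid

/-- `=_CM` as a setoid. -/
def cmSetoid : Setoid Term :=
  ⟨CMEq, ⟨fun a => CMEq.refl a, fun h => h.symm, fun h₁ h₂ => h₁.trans h₂⟩⟩

/-- The free Cartesian monoid `CM = T / =_CM`. -/
def CM : Type := Quotient cmSetoid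

/-- The submonoid of `CQ` generated by (the classes of) the members of `B`,
as a set of elements of `CQ`. -/
def genSubmonoidCQ (B : List Term) : Set CQ :=
  {x | ∃ l : List Term, (∀ t ∈ l, t ∈ B) ∧ Quotient.mk cqSetoid (listProd l) = x}

/-- The submonoid of `CM` generated by (the classes of) the members of `B`,
as a set of elements of `CM`. -/
def genSubmonoidCM (B : List Term) : Set CM :=
  {x | ∃ l : List Term, (∀ t ∈ l, t ∈ B) ∧ Quotient.mk cmSetoid (listProd l) = x}

/-- A shift: a product (under `comp`) of copies of `L` and `R`,
with `I` as the empty product. -/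
inductive IsShift : Term → Prop
  | unit : IsShift I
  | left : IsShift L
  | right : IsShift R
  | comp {s t : Term} : IsShift s → IsShift t → IsShift (comp s t)

/-- The CQ normal form (normal form w.r.t. rules (1)-(5)) of `X` is a shift. -/
def nfIsShift (X : Term) : Prop :=
  ∃ N, Red rules15 X N ∧ NF rules15 N ∧ IsShift N

/-- The product `F_0 * ⋯ * F_{n-1}` of the first `n` values of a sequence. -/
def prodTake (f : ℕ → Term) (n : ℕ) : Term := listProd ((List.range n).map f)

/-- `B` covers Cantor space: there is an infinite sequence of members of `B`
such that for each shift `S` some finite initial product composed with `S`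
has a CQ normal form that is not a shift. -/
def Covers (B : List Term) : Prop :=
  ∃ f : ℕ → Term, (∀ n, f n ∈ B) ∧
    ∀ S, IsShift S → ∃ n, ¬ nfIsShift (comp S (prodTake f n))

/-- The shift `S` is bad for `B`: for every finite sequence of members of `B`,
the CQ normal form of `S*F_1*⋯*F_n` is a shift. -/
def BadFor (B : List Term) (S : Term) : Prop :=
  ∀ l : List Term, (∀ t ∈ l, t ∈ B) → nfIsShift (comp S (listProd l))

/-- The length of a shift: the number of occurrences of `L` and `R`. -/
def lenLR : Term → ℕ
  | I => 0
  | L => 1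
  | R => 1
  | comp a b => lenLR a + lenLR b
  | pair a b => lenLR a + lenLR b

/-- `S` is extenuative for `B`: it is bad for `B` and the CQ normal forms of
`S*F_1*⋯*F_k` (for `F_i` in `B`) have unbounded length. -/
def Extenuative (B : List Term) (S : Term) : Prop :=
  BadFor B S ∧ ∀ n : ℕ, ∃ l : List Term, (∀ t ∈ l, t ∈ B) ∧
    ∃ N, Red rules15 (comp S (listProd l)) N ∧ NF rules15 N ∧ n ≤ lenLR N

/-- A term represents a right invertible element of CM. -/
def RightInvCM (F : Term) : Prop := ∃ G, CMEq (comp F G) I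

/-- The word (in `{L, R}`, read left to right, `L = false`, `R = true`) of a
shift. -/
def shiftWord : Term → List Bool
  | Term.I => []
  | Term.L => [false]
  | Term.R => [true]
  | Term.comp a b => shiftWord a ++ shiftWord b
  | Term.pair _ _ => []

/-- The list of the words of the shifts at the leaves of (the binary tree of)
a normal form, from left to right. -/
def leafWords : Term → List (List Bool)
  | Term.pair a b => leafWords a ++ leafWords b
  | t => [shiftWord t]

/-! ### Auxiliary development -/

/-- The letter term of a boolean: `false ↦ L`, `true ↦ R`. -/
def letterT : Bool → Term
  | false => L
  | true => R

/-- The term of a word: `comp`-right-nested product of letters ending in `I`. -/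
def termOfWord : List Bool → Term
  | [] => I
  | c :: w => comp (letterT c) (termOfWord w)

/-! #### From reduction to CM-equality -/

theorem cm_of_assoc {a b : Term} (h : AssocEq a b) : CMEq a b := by
  induction h with
  | assoc a b c => exact CMEq.assoc a b c
  | refl a => exact CMEq.refl a
  | symm _ ih => exact ih.symm
  | trans _ _ ih₁ ih₂ => exact ih₁.trans ih₂
  | comp_congr _ _ ih₁ ih₂ => exact ih₁.comp_congr ih₂
  | pair_congr _ _ ih₁ ih₂ => exact ih₁.pair_congr ih₂

theorem cm_of_rule {n : ℕ} {a b : Term} (h : Rule n a b) : CMEq a b := by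
  cases h with
  | r1 x y => exact CMEq.proj_left _ _
  | r2 x y => exact CMEq.proj_right _ _
  | r3 x y z => exact CMEq.lift _ _ _
  | r4 x => exact CMEq.one_mul _
  | r5 x => exact CMEq.mul_one _
  | r6 x =>
    exact ((CMEq.lift L R _).symm.trans
      ((CMEq.surj.comp_congr (CMEq.refl _)).trans (CMEq.one_mul _)))
  | r7 => exact CMEq.surj

theorem cm_of_step {J : Set ℕ} {a b : Term} (h : Step J a b) : CMEq a b := by
  induction h with
  | rule _ hr => exact cm_of_rule hr
  | comp_left _ ih => exact ih.comp_congr (CMEq.refl _)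
  | comp_right _ ih => exact (CMEq.refl _).comp_congr ih
  | pair_left _ ih => exact ih.pair_congr (CMEq.refl _)
  | pair_right _ ih => exact (CMEq.refl _).pair_congr ih

theorem cm_of_stepA {J : Set ℕ} {a b : Term} (h : StepA J a b) : CMEq a b := by
  obtain ⟨a', b', h1, h2, h3⟩ := h
  exact (cm_of_assoc h1).trans ((cm_of_step h2).trans (cm_of_assoc h3))

theorem cm_of_rtg {J : Set ℕ} {a b : Term}
    (h : Relation.ReflTransGen (StepA J) a b) : CMEq a b := by
  induction h with
  | refl => exact CMEq.refl a
  | tail _ hs ih => exact ih.trans (cm_of_stepA hs)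

theorem cm_of_red {J : Set ℕ} {a b : Term} (h : Red J a b) : CMEq a b := by
  obtain ⟨c, h1, h2⟩ := h
  exact (cm_of_rtg h1).trans (cm_of_assoc h2)

/-! #### Basic CM-equalities about words -/

theorem cm_word_append (u v : List Bool) (A : Term) :
    CMEq (comp (termOfWord (u ++ v)) A)
      (comp (termOfWord u) (comp (termOfWord v) A)) := by
  induction u with
  | nil => exact (CMEq.one_mul _).symm
  | cons c u ih =>
    exact (CMEq.assoc _ _ _).trans
      (((CMEq.refl (letterT c)).comp_congr ih).trans (CMEq.assoc _ _ _).symm)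

theorem cm_word_append' (u v : List Bool) :
    CMEq (termOfWord (u ++ v)) (comp (termOfWord u) (termOfWord v)) :=
  (CMEq.mul_one _).symm.trans ((cm_word_append u v I).trans
    ((CMEq.refl _).comp_congr (CMEq.mul_one _)))

theorem cm_shift_word {t : Term} (h : IsShift t) :
    CMEq t (termOfWord (shiftWord t)) := by
  induction h with
  | unit => exact CMEq.refl I
  | left => exact (CMEq.mul_one L).symm
  | right => exact (CMEq.mul_one R).symm
  | comp hs ht ihs iht =>
    exact (ihs.comp_congr iht).trans (cm_word_append' _ _).symm
/-! #### Semantics on Cantor space -/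

/-- Interleaving of two sequences. -/
def mix (a b : ℕ → Bool) : ℕ → Bool := fun n => if n % 2 = 0 then a (n / 2) else b (n / 2)

/-- Evaluation of terms as functions on Cantor space. -/
def eval : Term → (ℕ → Bool) → (ℕ → Bool)
  | I => fun x => x
  | L => fun x n => x (2 * n)
  | R => fun x n => x (2 * n + 1)
  | comp a b => fun x => eval a (eval b x)
  | pair a b => fun x => mix (eval a x) (eval b x)

theorem mix_left (a b : ℕ → Bool) (n : ℕ) : mix a b (2 * n) = a n := by
  unfold mix
  rw [if_pos (by omega)]
  congr 1
  omega

theorem mix_right (a b : ℕ → Bool) (n : ℕ) : mix a b (2 * n + 1) = b n := by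
  unfold mix
  rw [if_neg (by omega)]
  congr 1
  omega

theorem eval_sound {a b : Term} (h : CMEq a b) : eval a = eval b := by
  induction h with
  | proj_left f g => funext x n; exact mix_left _ _ n
  | proj_right f g => funext x n; exact mix_right _ _ n
  | lift f g h => rfl
  | surj =>
    funext x n
    show mix (fun n => x (2 * n)) (fun n => x (2 * n + 1)) n = x n
    unfold mix
    rcases Nat.mod_two_eq_zero_or_one n with h | h
    · rw [if_pos h]; show x (2 * (n / 2)) = x n; congr 1; omega
    · rw [if_neg (by omega)]; show x (2 * (n / 2) + 1) = x n; congr 1; omega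
  | assoc a b c => rfl
  | one_mul a => rfl
  | mul_one a => rfl
  | refl a => rfl
  | symm _ ih => exact ih.symm
  | trans _ _ ih₁ ih₂ => exact ih₁.trans ih₂
  | comp_congr _ _ ih₁ ih₂ =>
    show (fun x => eval _ (eval _ x)) = fun x => eval _ (eval _ x)
    rw [ih₁, ih₂]
  | pair_congr _ _ ih₁ ih₂ =>
    show (fun x => mix (eval _ x) (eval _ x)) = fun x => mix (eval _ x) (eval _ x)
    rw [ih₁, ih₂]

theorem eval_word_append (u v : List Bool) (x : ℕ → Bool) :
    eval (termOfWord (u ++ v)) x = eval (termOfWord u) (eval (termOfWord v) x) := by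
  rw [eval_sound (cm_word_append' u v)]; rfl

/-- Sections: every word-evaluation is surjective. -/
theorem eval_section (p : List Bool) (z : ℕ → Bool) :
    ∃ y, eval (termOfWord p.reverse) y = z := by
  induction p generalizing z with
  | nil => exact ⟨z, rfl⟩
  | cons c p ih =>
    obtain ⟨y', hy'⟩ := ih (z := z)
    refine ⟨mix y' y', ?_⟩
    rw [List.reverse_cons, eval_word_append]
    have : eval (termOfWord [c]) (mix y' y') = y' := by
      funext n
      cases c
      · exact mix_left _ _ n
      · exact mix_right _ _ n
    rw [this, hy']

/-- Joint surjectivity for incomparable paths. -/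
theorem eval_joint (p q : List Bool) (hpq : ¬ p <+: q) (hqp : ¬ q <+: p)
    (z0 z1 : ℕ → Bool) :
    ∃ y, eval (termOfWord p.reverse) y = z0 ∧ eval (termOfWord q.reverse) y = z1 := by
  induction p generalizing q z0 z1 with
  | nil => exact absurd (List.nil_prefix) hpq
  | cons c p ih =>
    cases q with
    | nil => exact absurd (List.nil_prefix) hqp
    | cons c' q =>
      have evw : ∀ (c : Bool) (w : List Bool) (a b : ℕ → Bool),
          eval (termOfWord ((c :: w).reverse)) (mix a b) =
            eval (termOfWord w.reverse) (if c then b else a) := by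
        intro c w a b
        rw [List.reverse_cons, eval_word_append]
        have harg : eval (termOfWord [c]) (mix a b) = if c then b else a := by
          funext n
          cases c
          · exact mix_left _ _ n
          · exact mix_right _ _ n
        rw [harg]
      by_cases hc : c = c'
      · subst hc
        have h1 : ¬ p <+: q := fun h => hpq (List.cons_prefix_cons.2 ⟨rfl, h⟩)
        have h2 : ¬ q <+: p := fun h => hqp (List.cons_prefix_cons.2 ⟨rfl, h⟩)
        obtain ⟨y', h0, h1'⟩ := ih q h1 h2 z0 z1
        refine ⟨mix y' y', ?_, ?_⟩ <;> rw [evw] <;> cases c <;> simpa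
      · obtain ⟨y0, hy0⟩ := eval_section p z0
        obtain ⟨y1, hy1⟩ := eval_section q z1
        cases c
        · have hc' : c' = true := by cases c' <;> simp_all
          subst hc'
          exact ⟨mix y0 y1, by rw [evw]; simpa, by rw [evw]; simpa⟩
        · have hc' : c' = false := by cases c' <;> simp_all
          subst hc'
          exact ⟨mix y1 y0, by rw [evw]; simpa, by rw [evw]; simpa⟩
/-! #### Structure of normal forms -/

/-- Normal trees: binary trees of pairs with shift leaves. -/
inductive NTree : Term → Prop
  | leaf {t : Term} : IsShift t → NTree t
  | node {a b : Term} : NTree a → NTree b → NTree (pair a b)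

theorem nf_comp_left {J : Set ℕ} {a b : Term} (h : NF J (comp a b)) : NF J a := by
  intro a' ⟨a₁, a₂, h1, h2, h3⟩
  exact h (comp a' b) ⟨comp a₁ b, comp a₂ b, h1.comp_congr (AssocEq.refl b),
    Step.comp_left h2, h3.comp_congr (AssocEq.refl b)⟩

theorem nf_comp_right {J : Set ℕ} {a b : Term} (h : NF J (comp a b)) : NF J b := by
  intro b' ⟨b₁, b₂, h1, h2, h3⟩
  exact h (comp a b') ⟨comp a b₁, comp a b₂, (AssocEq.refl a).comp_congr h1,
    Step.comp_right h2, (AssocEq.refl a).comp_congr h3⟩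

theorem nf_pair_left {J : Set ℕ} {a b : Term} (h : NF J (pair a b)) : NF J a := by
  intro a' ⟨a₁, a₂, h1, h2, h3⟩
  exact h (pair a' b) ⟨pair a₁ b, pair a₂ b, h1.pair_congr (AssocEq.refl b),
    Step.pair_left h2, h3.pair_congr (AssocEq.refl b)⟩

theorem nf_pair_right {J : Set ℕ} {a b : Term} (h : NF J (pair a b)) : NF J b := by
  intro b' ⟨b₁, b₂, h1, h2, h3⟩
  exact h (pair a b') ⟨pair a b₁, pair a b₂, (AssocEq.refl a).pair_congr h1,
    Step.pair_right h2, (AssocEq.refl a).pair_congr h3⟩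

/-- A shift composed with `b` is assoc-equal to a term with a single letter
(`I`, `L` or `R`) immediately to the left of `b`. -/
theorem shift_letter {a : Term} (h : IsShift a) (b : Term) :
    ∃ a0, (a0 = I ∨ a0 = L ∨ a0 = R) ∧
      (AssocEq (comp a b) (comp a0 b) ∨
        ∃ a', AssocEq (comp a b) (comp a' (comp a0 b))) := by
  induction h generalizing b with
  | unit => exact ⟨I, Or.inl rfl, Or.inl (AssocEq.refl _)⟩
  | left => exact ⟨L, Or.inr (Or.inl rfl), Or.inl (AssocEq.refl _)⟩
  | right => exact ⟨R, Or.inr (Or.inr rfl), Or.inl (AssocEq.refl _)⟩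
  | comp hs ht ihs iht =>
    obtain ⟨a0, ha0, hcase⟩ := iht b
    rcases hcase with hc | ⟨a', hc⟩
    · exact ⟨a0, ha0, Or.inr ⟨_, (AssocEq.assoc _ _ _).trans
        ((AssocEq.refl _).comp_congr hc)⟩⟩
    · exact ⟨a0, ha0, Or.inr ⟨_, ((AssocEq.assoc _ _ _).trans
        ((AssocEq.refl _).comp_congr hc)).trans (AssocEq.assoc _ _ _).symm⟩⟩

theorem letter_pair_step (a0 x y : Term) (h : a0 = I ∨ a0 = L ∨ a0 = R) :
    ∃ z, Step rules17 (comp a0 (pair x y)) z := by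
  rcases h with rfl | rfl | rfl
  · exact ⟨pair x y, Step.rule (by simp [rules17]) (Rule.r4 _)⟩
  · exact ⟨x, Step.rule (by simp [rules17]) (Rule.r1 _ _)⟩
  · exact ⟨y, Step.rule (by simp [rules17]) (Rule.r2 _ _)⟩

theorem nf_ntree : ∀ N, NF rules17 N → NTree N := by
  intro N
  induction N with
  | I => exact fun _ => NTree.leaf IsShift.unit
  | L => exact fun _ => NTree.leaf IsShift.left
  | R => exact fun _ => NTree.leaf IsShift.right
  | pair a b iha ihb =>
    intro h
    exact NTree.node (iha (nf_pair_left h)) (ihb (nf_pair_right h))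
  | comp a b iha ihb =>
    intro h
    have hta := iha (nf_comp_left h)
    have htb := ihb (nf_comp_right h)
    have hsa : IsShift a := by
      cases hta with
      | leaf hs => exact hs
      | node _ _ =>
        exact absurd ⟨_, _, AssocEq.refl _,
          Step.rule (show (3:ℕ) ∈ rules17 by simp [rules17]) (Rule.r3 _ _ b),
          AssocEq.refl _⟩ (h _)
    have hsb : IsShift b := by
      cases htb with
      | leaf hs => exact hs
      | node _ _ =>
        rename_i x y _ _
        obtain ⟨a0, ha0, hcase⟩ := shift_letter hsa (pair x y)
        obtain ⟨z, hz⟩ := letter_pair_step a0 x y ha0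
        rcases hcase with hc | ⟨a', hc⟩
        · exact absurd ⟨_, _, hc, hz, AssocEq.refl _⟩ (h z)
        · exact absurd ⟨_, _, hc, Step.comp_right hz, AssocEq.refl _⟩ (h _)
    exact NTree.leaf (hsa.comp hsb)
/-! #### Leaf paths -/

/-- The paths (from the root, `false` = left) of the leaves of a term. -/
def leafPaths : Term → List (List Bool)
  | Term.pair a b =>
      (leafPaths a).map (false :: ·) ++ (leafPaths b).map (true :: ·)
  | _ => [([] : List Bool)]

theorem leafWords_shift {t : Term} (h : IsShift t) : leafWords t = [shiftWord t] := by
  cases h <;> rfl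

theorem leafPaths_shift {t : Term} (h : IsShift t) : leafPaths t = [[]] := by
  cases h <;> rfl

theorem leafWords_pair (a b : Term) :
    leafWords (pair a b) = leafWords a ++ leafWords b := rfl

theorem leafPaths_pair (a b : Term) :
    leafPaths (pair a b) =
      (leafPaths a).map (false :: ·) ++ (leafPaths b).map (true :: ·) := rfl

theorem length_leafWords_eq : ∀ t, (leafWords t).length = (leafPaths t).length := by
  intro t
  induction t with
  | I => rfl
  | L => rfl
  | R => rfl
  | comp a b _ _ => rfl
  | pair a b iha ihb =>
    rw [leafWords_pair, leafPaths_pair]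
    simp [iha, ihb]

/-- The incomparability relation on paths. -/
def Incomp (p q : List Bool) : Prop := ¬ p <+: q ∧ ¬ q <+: p

theorem incomp_symm : Symmetric Incomp := fun _ _ h => ⟨h.2, h.1⟩

theorem leafPaths_pairwise : ∀ t, List.Pairwise Incomp (leafPaths t) := by
  intro t
  induction t with
  | I => exact List.pairwise_singleton _ _
  | L => exact List.pairwise_singleton _ _
  | R => exact List.pairwise_singleton _ _
  | comp a b _ _ => exact List.pairwise_singleton _ _
  | pair a b iha ihb =>
    rw [leafPaths_pair, List.pairwise_append]
    refine ⟨?_, ?_, ?_⟩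
    · exact iha.map _ (fun p q hpq => ⟨fun h => hpq.1 (List.cons_prefix_cons.1 h).2,
        fun h => hpq.2 (List.cons_prefix_cons.1 h).2⟩)
    · exact ihb.map _ (fun p q hpq => ⟨fun h => hpq.1 (List.cons_prefix_cons.1 h).2,
        fun h => hpq.2 (List.cons_prefix_cons.1 h).2⟩)
    · intro p hp q hq
      obtain ⟨p', _, rfl⟩ := List.mem_map.1 hp
      obtain ⟨q', _, rfl⟩ := List.mem_map.1 hq
      exact ⟨fun h => by simpa using (List.cons_prefix_cons.1 h).1,
        fun h => by simpa using (List.cons_prefix_cons.1 h).1⟩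

/-- Extraction: following the path of a leaf in the semantics of a normal tree
computes the semantics of the word at that leaf. -/
theorem eval_proj (c : Bool) (a b : Term) (x : ℕ → Bool) :
    eval (termOfWord [c]) (eval (pair a b) x) = eval (if c then b else a) x := by
  cases c
  · exact congrFun (eval_sound (((CMEq.mul_one L).comp_congr
      (CMEq.refl (pair a b))).trans (CMEq.proj_left a b))) x
  · exact congrFun (eval_sound (((CMEq.mul_one R).comp_congr
      (CMEq.refl (pair a b))).trans (CMEq.proj_right a b))) x

/-- Extraction: following the path of a leaf in the semantics of a normal tree
computes the semantics of the word at that leaf. -/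
theorem extract_eval {N : Term} (h : NTree N) :
    ∀ w p, (w, p) ∈ List.zip (leafWords N) (leafPaths N) →
      ∀ x, eval (termOfWord p.reverse) (eval N x) = eval (termOfWord w) x := by
  induction h with
  | @leaf t ht =>
    intro w p hm x
    rw [leafWords_shift ht, leafPaths_shift ht] at hm
    simp only [List.zip_cons_cons, List.zip_nil_right, List.mem_singleton,
      Prod.mk.injEq] at hm
    obtain ⟨rfl, rfl⟩ := hm
    rw [eval_sound (cm_shift_word ht)]
    rfl
  | @node a b ha hb iha ihb =>
    intro w p hm x
    rw [leafWords_pair, leafPaths_pair,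
      List.zip_append (by rw [length_leafWords_eq]; simp)] at hm
    rcases List.mem_append.1 hm with hm | hm
    · rw [List.zip_map_right] at hm
      obtain ⟨⟨w', p'⟩, hm', heq⟩ := List.mem_map.1 hm
      obtain ⟨rfl, rfl⟩ : w' = w ∧ false :: p' = p := by
        simpa [Prod.map] using heq
      rw [List.reverse_cons, eval_word_append, eval_proj false a b x]
      exact iha _ _ hm' x
    · rw [List.zip_map_right] at hm
      obtain ⟨⟨w', p'⟩, hm', heq⟩ := List.mem_map.1 hm
      obtain ⟨rfl, rfl⟩ : w' = w ∧ true :: p' = p := by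
        simpa [Prod.map] using heq
      rw [List.reverse_cons, eval_word_append, eval_proj true a b x]
      exact ihb _ _ hm' x

/-- Assembling: if `G` maps each leaf word of the normal tree `N` to the
corresponding reversed path composed with `A`, then `N * G = A` in CM. -/
theorem main_assemble {N : Term} (h : NTree N) :
    ∀ G A, (∀ w p, (w, p) ∈ List.zip (leafWords N) (leafPaths N) →
        CMEq (comp (termOfWord w) G) (comp (termOfWord p.reverse) A)) →
      CMEq (comp N G) A := by
  induction h with
  | @leaf t ht =>
    intro G A hyp
    have hm : (shiftWord t, ([] : List Bool)) ∈
        List.zip (leafWords t) (leafPaths t) := by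
      rw [leafWords_shift ht, leafPaths_shift ht]; simp
    have h1 := hyp _ _ hm
    exact ((cm_shift_word ht).comp_congr (CMEq.refl G)).trans
      (h1.trans (CMEq.one_mul A))
  | @node a b ha hb iha ihb =>
    intro G A hyp
    have key : ∀ (c : Bool) (w p : List Bool),
        (w, c :: p) ∈ List.zip (leafWords (pair a b)) (leafPaths (pair a b)) →
        CMEq (comp (termOfWord w) G) (comp (termOfWord p.reverse)
          (comp (letterT c) A)) := by
      intro c w p hm
      refine (hyp w (c :: p) hm).trans ?_
      rw [List.reverse_cons]
      exact (cm_word_append p.reverse [c] A).trans ((CMEq.refl _).comp_congr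
        ((CMEq.assoc _ _ _).trans ((CMEq.refl _).comp_congr (CMEq.one_mul A))))
    have hmem : ∀ (c : Bool) (lw lp : List (List Bool)) (w p : List Bool),
        (w, p) ∈ List.zip lw lp →
        (w, c :: p) ∈ List.zip lw (lp.map (c :: ·)) := by
      intro c lw lp w p hm
      rw [List.zip_map_right]
      exact List.mem_map.2 ⟨(w, p), hm, rfl⟩
    have hzip : List.zip (leafWords (pair a b)) (leafPaths (pair a b)) =
        List.zip (leafWords a) ((leafPaths a).map (false :: ·)) ++
          List.zip (leafWords b) ((leafPaths b).map (true :: ·)) := by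
      rw [leafWords_pair, leafPaths_pair,
        List.zip_append (by rw [length_leafWords_eq]; simp)]
    have hL : CMEq (comp a G) (comp L A) := by
      refine iha G (comp L A) fun w p hm => ?_
      exact key false w p (by rw [hzip]; exact List.mem_append_left _ (hmem _ _ _ _ _ hm))
    have hR : CMEq (comp b G) (comp R A) := by
      refine ihb G (comp R A) fun w p hm => ?_
      exact key true w p (by rw [hzip]; exact List.mem_append_right _ (hmem _ _ _ _ _ hm))
    exact (CMEq.lift a b G).trans ((hL.pair_congr hR).trans
      (((CMEq.lift L R A).symm.trans (CMEq.surj.comp_congr (CMEq.refl A))).trans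
        (CMEq.one_mul A)))
/-! #### Construction of the right inverse -/

/-- Keep the entries whose address starts with `c`, stripping that letter. -/
def stripC (c : Bool) (es : List (List Bool × Term)) : List (List Bool × Term) :=
  es.filterMap fun e =>
    if e.1.head? = some c then some (e.1.tail, e.2) else none

/-- Build a term having value `v` at (reversed) address `a` for each entry
`(a, v)`. -/
def buildG : ℕ → List (List Bool × Term) → Term
  | 0, _ => I
  | n + 1, es =>
    match es.find? (fun e => e.1.isEmpty) with
    | some e => e.2
    | none => pair (buildG n (stripC false es)) (buildG n (stripC true es))

/-- The pairwise prefix-incomparability relation on entries. -/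
def EIncomp (e1 e2 : List Bool × Term) : Prop := Incomp e1.1 e2.1

theorem eincomp_symm : Symmetric EIncomp := fun _ _ h => incomp_symm h

theorem mem_stripC {c : Bool} {es : List (List Bool × Term)} {a : List Bool}
    {v : Term} (h : (c :: a, v) ∈ es) : (a, v) ∈ stripC c es := by
  refine List.mem_filterMap.2 ⟨(c :: a, v), h, ?_⟩
  simp

theorem stripC_pairwise {c : Bool} {es : List (List Bool × Term)}
    (h : List.Pairwise EIncomp es) : List.Pairwise EIncomp (stripC c es) := by
  refine h.filterMap _ fun e1 e2 h12 b1 hb1 b2 hb2 => ?_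
  obtain ⟨l1, v1⟩ := e1
  obtain ⟨l2, v2⟩ := e2
  split at hb1
  · split at hb2
    · rename_i h1 h2
      obtain rfl := Option.some.inj hb1
      obtain rfl := Option.some.inj hb2
      cases l1 with
      | nil => simp at h1
      | cons c1 a1 =>
        cases l2 with
        | nil => simp at h2
        | cons c2 a2 =>
          have hc1 : c1 = c := by simpa using h1
          have hc2 : c2 = c := by simpa using h2
          subst hc1
          subst hc2
          exact ⟨fun hp => h12.1 (List.cons_prefix_cons.2 ⟨rfl, by simpa using hp⟩),
            fun hp => h12.2 (List.cons_prefix_cons.2 ⟨rfl, by simpa using hp⟩)⟩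
    · simp at hb2
  · simp at hb1

theorem buildG_nav : ∀ (fuel : ℕ) (es : List (List Bool × Term))
    (_ : List.Pairwise EIncomp es) (a : List Bool) (v : Term)
    (_ : (a, v) ∈ es) (_ : a.length < fuel),
    CMEq (comp (termOfWord a.reverse) (buildG fuel es)) v := by
  intro fuel
  induction fuel with
  | zero => intro es _ a v _ hlen; omega
  | succ n ih =>
    intro es hpw a v hmem hlen
    cases a with
    | nil =>
      have hfind : ∃ e, es.find? (fun e => e.1.isEmpty) = some e := by
        have : (fun (e : List Bool × Term) => e.1.isEmpty) (([], v)) = true := rfl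
        rcases hf : es.find? (fun e => e.1.isEmpty) with _ | e
        · exact absurd this (by simpa using List.find?_eq_none.1 hf _ hmem)
        · exact ⟨e, hf⟩
      obtain ⟨e, he⟩ := hfind
      have hee : e ∈ es := List.mem_of_find?_eq_some he
      have he1 : e.1 = [] := by
        have := List.find?_some he
        simpa [List.isEmpty_iff] using this
      have hev : e = ([], v) := by
        by_contra hne
        have := (haveI : Std.Symm EIncomp := ⟨fun _ _ h => eincomp_symm h⟩; hpw.forall) hee hmem hne
        exact this.1 (he1 ▸ List.nil_prefix)
      have hbG : buildG (n + 1) es = v := by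
        rw [buildG, he, hev]
      rw [hbG]
      exact CMEq.one_mul v
    | cons c a =>
      have hfind : es.find? (fun e => e.1.isEmpty) = none := by
        refine List.find?_eq_none.2 fun e hee hpe => ?_
        have he1 : e.1 = [] := by simpa [List.isEmpty_iff] using hpe
        have hne : e ≠ (c :: a, v) := fun h => by simp [h] at he1
        have := (haveI : Std.Symm EIncomp := ⟨fun _ _ h => eincomp_symm h⟩; hpw.forall) hee hmem hne
        exact this.1 (he1 ▸ List.nil_prefix)
      have hbG : buildG (n + 1) es =
          pair (buildG n (stripC false es)) (buildG n (stripC true es)) := by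
        rw [buildG, hfind]
      rw [hbG, List.reverse_cons]
      have hstep : CMEq
          (comp (termOfWord (a.reverse ++ [c]))
            (pair (buildG n (stripC false es)) (buildG n (stripC true es))))
          (comp (termOfWord a.reverse) (buildG n (stripC c es))) := by
        refine (cm_word_append a.reverse [c] _).trans
          ((CMEq.refl _).comp_congr ?_)
        refine ((CMEq.assoc _ _ _).trans
          ((CMEq.refl _).comp_congr (CMEq.one_mul _))).trans ?_
        cases c
        · exact CMEq.proj_left _ _
        · exact CMEq.proj_right _ _
      refine hstep.trans (ih (stripC c es) (stripC_pairwise hpw) a v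
        (mem_stripC hmem) (by simpa using Nat.lt_of_succ_lt_succ hlen))
theorem length_le_foldr (ws : List (List Bool)) (w : List Bool) (h : w ∈ ws) :
    w.length ≤ ws.foldr (fun u n => max u.length n) 0 := by
  induction ws with
  | nil => simp at h
  | cons u ws ih =>
    rcases List.mem_cons.1 h with rfl | h
    · exact le_max_left _ _
    · exact le_trans (ih h) (le_max_right _ _)

/-- Characterization of right invertibility: `F` is right invertible in CM iff
in its CM normal form `N` no leaf shift is a final segment (suffix of the word
read left to right) of the shift at another leaf. -/
theorem right_invertible_iff_no_suffix (F N : Term)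
    (hred : Red rules17 F N) (hnf : NF rules17 N) :
    RightInvCM F ↔
      ∀ (i j : ℕ) (hi : i < (leafWords N).length) (hj : j < (leafWords N).length),
        i ≠ j → ¬ ((leafWords N).get ⟨i, hi⟩ <:+ (leafWords N).get ⟨j, hj⟩) := by
  have hFN : CMEq F N := cm_of_red hred
  have hnt : NTree N := nf_ntree N hnf
  have hlwp : (leafWords N).length = (leafPaths N).length := length_leafWords_eq N
  have hzlen : (List.zip (leafWords N) (leafPaths N)).length = (leafWords N).length := by
    rw [List.length_zip, hlwp, Nat.min_self]
  constructor
  · rintro ⟨G, hG⟩ i j hi hj hij hsuff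
    have hNG : CMEq (comp N G) I := (hFN.symm.comp_congr (CMEq.refl G)).trans hG
    have hj' : j < (leafPaths N).length := hlwp ▸ hj
    have hi' : i < (leafPaths N).length := hlwp ▸ hi
    set wi := (leafWords N).get ⟨i, hi⟩ with hwi
    set wj := (leafWords N).get ⟨j, hj⟩ with hwj
    set pi := (leafPaths N).get ⟨i, hi'⟩ with hpi
    set pj := (leafPaths N).get ⟨j, hj'⟩ with hpj
    have hmi : (wi, pi) ∈ List.zip (leafWords N) (leafPaths N) := by
      have h1 : i < (List.zip (leafWords N) (leafPaths N)).length := by omega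
      have h2 : (List.zip (leafWords N) (leafPaths N)).get ⟨i, h1⟩ = (wi, pi) := by
        rw [hwi, hpi]
        simp [List.getElem_zip]
      exact h2 ▸ List.get_mem _ _
    have hmj : (wj, pj) ∈ List.zip (leafWords N) (leafPaths N) := by
      have h1 : j < (List.zip (leafWords N) (leafPaths N)).length := by omega
      have h2 : (List.zip (leafWords N) (leafPaths N)).get ⟨j, h1⟩ = (wj, pj) := by
        rw [hwj, hpj]
        simp [List.getElem_zip]
      exact h2 ▸ List.get_mem _ _
    have hinc : Incomp pi pj := by
      have hpw := leafPaths_pairwise N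
      rcases Nat.lt_or_ge i j with hlt | hge
      · exact List.pairwise_iff_get.1 hpw ⟨i, hi'⟩ ⟨j, hj'⟩ hlt
      · have hlt : j < i := by omega
        exact incomp_symm (List.pairwise_iff_get.1 hpw ⟨j, hj'⟩ ⟨i, hi'⟩ hlt)
    obtain ⟨u, hu⟩ := hsuff
    set z0 : ℕ → Bool := fun _ => false with hz0
    set z1 : ℕ → Bool := fun n => !(eval (termOfWord u) z0 n) with hz1
    obtain ⟨y, hy0, hy1⟩ := eval_joint pi pj hinc.1 hinc.2 z0 z1
    have hyr : eval N (eval G y) = y := by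
      have h1 : eval (comp N G) = eval I := eval_sound hNG
      exact congrFun h1 y
    have e0 := extract_eval hnt wi pi hmi (eval G y)
    have e1 := extract_eval hnt wj pj hmj (eval G y)
    rw [hyr] at e0 e1
    have hfinal : z1 = eval (termOfWord u) z0 := by
      calc z1 = eval (termOfWord pj.reverse) y := hy1.symm
        _ = eval (termOfWord wj) (eval G y) := e1
        _ = eval (termOfWord (u ++ wi)) (eval G y) := by rw [hu]
        _ = eval (termOfWord u) (eval (termOfWord wi) (eval G y)) :=
            eval_word_append u wi _
        _ = eval (termOfWord u) (eval (termOfWord pi.reverse) y) := by rw [e0]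
        _ = eval (termOfWord u) z0 := by rw [hy0]
    have := congrFun hfinal 0
    simp [hz1] at this
  · intro hsuf
    set es : List (List Bool × Term) :=
      (List.zip (leafWords N) (leafPaths N)).map
        (fun wp => (wp.1.reverse, termOfWord wp.2.reverse)) with hes
    set fuel : ℕ := ((leafWords N).foldr (fun w n => max w.length n) 0) + 1 with hfuel
    set G : Term := buildG fuel es with hGdef
    have heslen : es.length = (leafWords N).length := by
      rw [hes, List.length_map, hzlen]
    have hpw : List.Pairwise EIncomp es := by
      refine List.pairwise_iff_get.2 fun k l hkl => ?_
      have hk : (k : ℕ) < (leafWords N).length := by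
        have := k.2
        omega
      have hl : (l : ℕ) < (leafWords N).length := by
        have := l.2
        omega
      have hk' : (k : ℕ) < (List.zip (leafWords N) (leafPaths N)).length := by omega
      have hl' : (l : ℕ) < (List.zip (leafWords N) (leafPaths N)).length := by omega
      have hgk : es.get k = ((leafWords N)[(k : ℕ)]'hk |>.reverse,
          termOfWord ((leafPaths N)[(k : ℕ)]'(by omega)).reverse) := by
        simp [hes, List.getElem_zip]
      have hgl : es.get l = ((leafWords N)[(l : ℕ)]'hl |>.reverse,
          termOfWord ((leafPaths N)[(l : ℕ)]'(by omega)).reverse) := by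
        simp [hes, List.getElem_zip]
      rw [hgk, hgl]
      have hne : (k : ℕ) ≠ (l : ℕ) := by omega
      refine ⟨fun hp => ?_, fun hp => ?_⟩
      · exact hsuf (k : ℕ) (l : ℕ) hk hl hne (List.reverse_prefix.1 hp)
      · exact hsuf (l : ℕ) (k : ℕ) hl hk (Ne.symm hne) (List.reverse_prefix.1 hp)
    have hNG : CMEq (comp N G) I := by
      refine main_assemble hnt G I fun w p hm => ?_
      have hmem : (w.reverse, termOfWord p.reverse) ∈ es := by
        rw [hes]
        exact List.mem_map.2 ⟨(w, p), hm, rfl⟩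
      have hwmem : w ∈ leafWords N := (List.of_mem_zip hm).1
      have hlen : w.reverse.length < fuel := by
        rw [List.length_reverse, hfuel]
        exact Nat.lt_succ_of_le (length_le_foldr _ _ hwmem)
      have := buildG_nav fuel es hpw w.reverse (termOfWord p.reverse) hmem hlen
      rw [List.reverse_reverse] at this
      exact this.trans (CMEq.mul_one _).symm
    exact ⟨G, (hFN.comp_congr (CMEq.refl G)).trans hNG⟩
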